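/- (Schur's second multiplier theorem) Let A be a Schur ring over a finite abelian group G, p a prime divisor of |G|, and H = {g ∈ G : g^p = e}. Then for every A-set X, the set X^[p] = {x^p : x ∈ X and |X ∩ Hx| ≢ 0 (mod p)} is an A-set. -/

import Mathlib

open scoped BigOperators

/-- The indicator element `X̲ = Σ_{x∈X} x` of a finset in the integral group ring `ℤG`. -/
noncomputable def grpInd {G : Type*} [Group G] (X : Finset G) : MonoidAlgebra ℤ G :=
  ∑ x ∈ X, MonoidAlgebra.single x (1 : ℤ)

/-- A Schur ring over a finite group `G`: a partition of `G` containing `{1}`,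
closed under inverses, whose indicator elements span a subring of `ℤG`. -/
structure SchurRing (G : Type*) [Group G] [Fintype G] [DecidableEq G] where
  parts : Finset (Finset G)
  nonempty_mem : ∀ X ∈ parts, X.Nonempty
  cover : ∀ g : G, ∃ X ∈ parts, g ∈ X
  pairwise_disjoint : ∀ X ∈ parts, ∀ Y ∈ parts, X ≠ Y → Disjoint X Y
  one_mem : ({1} : Finset G) ∈ parts
  inv_mem : ∀ X ∈ parts, X.image (·⁻¹) ∈ parts
  mul_mem : ∀ X ∈ parts, ∀ Y ∈ parts, ∃ c : Finset G → ℤ,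
    grpInd X * grpInd Y = ∑ Z ∈ parts, c Z • grpInd Z

namespace SchurRing

variable {G : Type*} [Group G] [Fintype G] [DecidableEq G]

/-- The underlying `ℤ`-module of the Schur ring: the span of the indicators of basic sets. -/
noncomputable def carrier (A : SchurRing G) : Submodule ℤ (MonoidAlgebra ℤ G) :=
  Submodule.span ℤ {v | ∃ X ∈ A.parts, v = grpInd X}

/-- `X ⊆ G` is an `A`-set if its indicator lies in `A`. -/
def IsASet (A : SchurRing G) (X : Finset G) : Prop := grpInd X ∈ A.carrier

/-- `A` is a subring of `B` (as S-rings over the same group). -/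
def le (A B : SchurRing G) : Prop := ∀ X ∈ A.parts, grpInd X ∈ B.carrier

end SchurRing

/-- An algebraic isomorphism of Schur rings: a bijection of basic sets preserving all
structure constants (the structure constant `c^Z_{X,Y}` is the coefficient of the
product `X̲·Y̲` at any `z ∈ Z`). -/
def IsAlgIso {G G' : Type*} [Group G] [Fintype G] [DecidableEq G]
    [Group G'] [Fintype G'] [DecidableEq G']
    (A : SchurRing G) (A' : SchurRing G') (φ : Finset G → Finset G') : Prop :=
  Set.BijOn φ ↑A.parts ↑A'.parts ∧
  ∀ X ∈ A.parts, ∀ Y ∈ A.parts, ∀ Z ∈ A.parts, ∀ z ∈ Z, ∀ z' ∈ φ Z,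
    (grpInd X * grpInd Y).coeff z = (grpInd (φ X) * grpInd (φ Y)).coeff z'

/-- A combinatorial isomorphism of Schur rings: a bijection `G → G'` mapping basic sets to
basic sets and inducing a Cayley graph isomorphism on each basic set. -/
def IsCombIso {G G' : Type*} [Group G] [Fintype G] [DecidableEq G]
    [Group G'] [Fintype G'] [DecidableEq G']
    (A : SchurRing G) (A' : SchurRing G') (f : G → G') : Prop :=
  Function.Bijective f ∧
  ∀ X ∈ A.parts, X.image f ∈ A'.parts ∧
    ∀ g h : G, h * g⁻¹ ∈ X ↔ f h * (f g)⁻¹ ∈ X.image f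

/-- An automorphism of a Schur ring: a permutation of `G` preserving the edge set of
`Cay(G,X)` for every basic set `X`. -/
def IsSchurAut {G : Type*} [Group G] [Fintype G] [DecidableEq G]
    (A : SchurRing G) (f : G → G) : Prop :=
  Function.Bijective f ∧ ∀ X ∈ A.parts, ∀ g h : G, h * g⁻¹ ∈ X ↔ f h * (f g)⁻¹ ∈ X

/-- Separability with respect to the class of (finite) abelian groups. -/
def SchurRing.IsSeparableAbelian {G : Type} [Group G] [Fintype G] [DecidableEq G]
    (A : SchurRing G) : Prop :=
  ∀ (G' : Type) [CommGroup G'] [Fintype G'] [DecidableEq G'],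
    ∀ (A' : SchurRing G') (φ : Finset G → Finset G'),
    IsAlgIso A A' φ →
    ∃ f : G → G', IsCombIso A A' f ∧ ∀ X ∈ A.parts, φ X = X.image f


section AuxLemmas

open Finset

variable {G : Type*} [Group G] [Fintype G] [DecidableEq G]

lemma grpInd_apply (X : Finset G) (g : G) : (grpInd X).coeff g = if g ∈ X then 1 else 0 := by
  classical
  rw [grpInd, MonoidAlgebra.coeff_sum, Finset.sum_apply']
  simp [MonoidAlgebra.coeff_single, Finsupp.single_apply]

lemma one_mem_carrier (A : SchurRing G) : (1 : MonoidAlgebra ℤ G) ∈ A.carrier := by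
  have h1 : (1 : MonoidAlgebra ℤ G) = grpInd ({1} : Finset G) := by
    simp [grpInd, MonoidAlgebra.one_def]
  rw [h1]
  exact Submodule.subset_span ⟨{1}, A.one_mem, rfl⟩

lemma mul_mem_carrier (A : SchurRing G) {a b : MonoidAlgebra ℤ G}
    (ha : a ∈ A.carrier) (hb : b ∈ A.carrier) : a * b ∈ A.carrier := by
  have hb' : b ∈ Submodule.span ℤ {v | ∃ X ∈ A.parts, v = grpInd X} := hb
  have ha' : a ∈ Submodule.span ℤ {v | ∃ X ∈ A.parts, v = grpInd X} := ha
  clear ha hb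
  induction hb' using Submodule.span_induction with
  | mem y hy =>
    induction ha' using Submodule.span_induction with
    | mem x hx =>
      obtain ⟨Xs, hXp, rfl⟩ := hx
      obtain ⟨Ys, hYp, rfl⟩ := hy
      obtain ⟨c, hc⟩ := A.mul_mem Xs hXp Ys hYp
      rw [hc]
      exact Submodule.sum_mem _ fun Z hZ =>
        Submodule.smul_mem _ _ (Submodule.subset_span ⟨Z, hZ, rfl⟩)
    | zero => rw [zero_mul]; exact A.carrier.zero_mem
    | add x y hx hy ihx ihy => rw [add_mul]; exact A.carrier.add_mem ihx ihy
    | smul c x hx ih => rw [smul_mul_assoc]; exact A.carrier.smul_mem _ ih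
  | zero => rw [mul_zero]; exact A.carrier.zero_mem
  | add x y hx hy ihx ihy => rw [mul_add]; exact A.carrier.add_mem ihx ihy
  | smul c x hx ih => rw [mul_smul_comm]; exact A.carrier.smul_mem _ ih

lemma pow_mem_carrier (A : SchurRing G) {a : MonoidAlgebra ℤ G}
    (ha : a ∈ A.carrier) (n : ℕ) : a ^ n ∈ A.carrier := by
  induction n with
  | zero => rw [pow_zero]; exact one_mem_carrier A
  | succ n ih => rw [pow_succ]; exact mul_mem_carrier A ih ha

lemma carrier_coeff_const (A : SchurRing G) {b : MonoidAlgebra ℤ G} (hb : b ∈ A.carrier)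
    {Z : Finset G} (hZ : Z ∈ A.parts) {z z' : G} (hz : z ∈ Z) (hz' : z' ∈ Z) :
    b.coeff z = b.coeff z' := by
  have hb' : b ∈ Submodule.span ℤ {v | ∃ X ∈ A.parts, v = grpInd X} := hb
  clear hb
  induction hb' using Submodule.span_induction with
  | mem x hx =>
    obtain ⟨Y, hYp, rfl⟩ := hx
    rw [grpInd_apply, grpInd_apply]
    by_cases h : Y = Z
    · subst h; simp [hz, hz']
    · have hd := A.pairwise_disjoint Y hYp Z hZ h
      have h1 : z ∉ Y := fun hzY => (Finset.disjoint_left.mp hd hzY hz)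
      have h2 : z' ∉ Y := fun hzY => (Finset.disjoint_left.mp hd hzY hz')
      simp [h1, h2]
  | zero => simp
  | add x y hx hy ihx ihy =>
    show x.coeff z + y.coeff z = x.coeff z' + y.coeff z'
    rw [ihx, ihy]
  | smul c x hx ih =>
    show c • x.coeff z = c • x.coeff z'
    rw [ih]

lemma filter_mem_carrier (A : SchurRing G) (P : G → Prop) [DecidablePred P]
    (hconst : ∀ Z ∈ A.parts, ∀ z ∈ Z, ∀ z' ∈ Z, P z → P z') :
    grpInd (Finset.univ.filter P) ∈ A.carrier := by
  classical
  have hset : Finset.univ.filter P =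
      (A.parts.filter (fun Z => ∃ z ∈ Z, P z)).biUnion id := by
    ext g
    simp only [Finset.mem_filter, Finset.mem_univ, true_and, Finset.mem_biUnion, id]
    constructor
    · intro hg
      obtain ⟨Z, hZ, hgZ⟩ := A.cover g
      exact ⟨Z, ⟨hZ, g, hgZ, hg⟩, hgZ⟩
    · rintro ⟨Z, ⟨hZp, z, hzZ, hPz⟩, hgZ⟩
      exact hconst Z hZp z hzZ g hgZ hPz
  rw [hset, grpInd, Finset.sum_biUnion]
  · exact Submodule.sum_mem _ fun Z hZ =>
      Submodule.subset_span ⟨Z, (Finset.mem_filter.mp hZ).1, rfl⟩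
  · intro x hx y hy hxy
    exact A.pairwise_disjoint x (Finset.mem_filter.mp hx).1 y (Finset.mem_filter.mp hy).1 hxy

end AuxLemmas

section Frobenius

variable {G : Type*} [CommGroup G] [Fintype G] [DecidableEq G]

lemma coeff_pow_p (X : Finset G) (p : ℕ) [Fact p.Prime] (g : G) :
    (((grpInd X ^ p).coeff g : ℤ) : ZMod p) = ((X.filter (fun x => x ^ p = g)).card : ZMod p) := by
  classical
  haveI : CharP (MonoidAlgebra (ZMod p) G) p := by
    refine charP_of_injective_ringHom
      (f := (MonoidAlgebra.singleOneRingHom : ZMod p →+* MonoidAlgebra (ZMod p) G)) ?_ p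
    intro a b hab
    have h1 := congrArg (fun f : MonoidAlgebra (ZMod p) G => f.coeff 1) hab
    simpa [MonoidAlgebra.singleOneRingHom, Finsupp.single_eq_same] using h1
  let π : MonoidAlgebra ℤ G →ₐ[ℤ] MonoidAlgebra (ZMod p) G :=
    MonoidAlgebra.lift ℤ _ G (MonoidAlgebra.of (ZMod p) G)
  have hπsingle : ∀ (a : G) (c : ℤ),
      π (MonoidAlgebra.single a c) = MonoidAlgebra.single a ((c : ℤ) : ZMod p) := by
    intro a c
    rw [show (π (MonoidAlgebra.single a c)) = c • (MonoidAlgebra.of (ZMod p) G a) from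
      MonoidAlgebra.lift_single _ _ _]
    rw [MonoidAlgebra.of_apply, MonoidAlgebra.smul_single, zsmul_one]
  have hπ : ∀ (b : MonoidAlgebra ℤ G) (h : G), (π b).coeff h = ((b.coeff h : ℤ) : ZMod p) := by
    intro b
    induction b using MonoidAlgebra.induction_linear with
    | zero => simp
    | add f g hf hg =>
      intro h
      have e : (π (f + g)).coeff h = (π f).coeff h + (π g).coeff h := by rw [map_add]; rfl
      have e2 : ((f + g).coeff h : ℤ) = f.coeff h + g.coeff h := rfl
      rw [e, e2, hf, hg, Int.cast_add]
    | single a c =>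
      intro h
      rw [hπsingle]
      simp [MonoidAlgebra.coeff_single, Finsupp.single_apply, apply_ite (fun z : ℤ => (z : ZMod p))]
  have hπX : π (grpInd X) = ∑ x ∈ X, MonoidAlgebra.single x (1 : ZMod p) := by
    rw [grpInd, map_sum]
    exact Finset.sum_congr rfl fun x _ => by rw [hπsingle]; norm_num
  have hfrob : π (grpInd X ^ p) = ∑ x ∈ X, MonoidAlgebra.single (x ^ p) (1 : ZMod p) := by
    rw [map_pow, hπX, sum_pow_char]
    exact Finset.sum_congr rfl fun x _ => by
      rw [MonoidAlgebra.single_pow, one_pow]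
  rw [← hπ, hfrob, MonoidAlgebra.coeff_sum, Finset.sum_apply']
  simp only [MonoidAlgebra.coeff_single, Finsupp.single_apply]
  rw [Finset.sum_boole]

end Frobenius


/-- Schur's second multiplier theorem: for a prime `p` dividing `|G|`,
with `H = {g : g^p = 1}`, the set `X^[p] = {x^p : x ∈ X, |X ∩ Hx| ≢ 0 (mod p)}`
is an `A`-set for every `A`-set `X`. -/


theorem stmt4 {G : Type*} [CommGroup G] [Fintype G] [DecidableEq G] (A : SchurRing G)
    (p : ℕ) (hp : p.Prime) (hpG : p ∣ Fintype.card G)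
    (X : Finset G) (hX : A.IsASet X) :
    A.IsASet ((X.filter (fun x =>
        ¬ (p ∣ (X.filter (fun y => (y * x⁻¹) ^ p = 1)).card))).image (fun x => x ^ p)) := by
  classical
  haveI : Fact p.Prime := ⟨hp⟩
  set b := grpInd X ^ p with hbdef
  have hb : b ∈ A.carrier := pow_mem_carrier A hX p
  have key : ∀ g : G, ((b.coeff g : ℤ) : ZMod p) = ((X.filter (fun x => x ^ p = g)).card : ZMod p) :=
    fun g => coeff_pow_p X p g
  set P : G → Prop := fun g => ¬ p ∣ (X.filter (fun x => x ^ p = g)).card with hPdef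
  have hP : ∀ Z ∈ A.parts, ∀ z ∈ Z, ∀ z' ∈ Z, P z → P z' := by
    intro Z hZ z hz z' hz' h
    have hbz : b.coeff z = b.coeff z' := carrier_coeff_const A hb hZ hz hz'
    have hcc : ((X.filter (fun x => x ^ p = z)).card : ZMod p)
        = ((X.filter (fun x => x ^ p = z')).card : ZMod p) := by
      rw [← key, ← key, hbz]
    simp only [hPdef, ← ZMod.natCast_eq_zero_iff] at h ⊢
    rwa [← hcc]
  have hfil : ∀ g : G, ∀ x : G, x ^ p = g →
      X.filter (fun y => (y * x⁻¹) ^ p = 1) = X.filter (fun y => y ^ p = g) := by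
    intro g x hx
    apply Finset.filter_congr
    intro y _
    rw [mul_pow, inv_pow, mul_inv_eq_one, hx]
  have hset : (X.filter (fun x =>
        ¬ (p ∣ (X.filter (fun y => (y * x⁻¹) ^ p = 1)).card))).image (fun x => x ^ p)
      = Finset.univ.filter P := by
    ext g
    simp only [Finset.mem_image, Finset.mem_filter, Finset.mem_univ, true_and, hPdef]
    constructor
    · rintro ⟨x, ⟨hxX, hcard⟩, rfl⟩
      rwa [hfil (x ^ p) x rfl] at hcard
    · intro hcard
      have hne : (X.filter (fun x => x ^ p = g)).Nonempty := by
        rw [Finset.nonempty_iff_ne_empty]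
        intro h0
        exact hcard (by rw [h0]; simp)
      obtain ⟨x, hx⟩ := hne
      obtain ⟨hxX, hxg⟩ := Finset.mem_filter.mp hx
      exact ⟨x, ⟨hxX, by rwa [hfil g x hxg]⟩, hxg⟩
  rw [SchurRing.IsASet, hset]
  exact filter_mem_carrier A P hP
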